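/- (Barycenter bound for locally constrained ultrametric trees.) Let T be the complete k-ary tree of depth D with leaves L, and suppose vectors ρ(u) ∈ ℝ^N, u ∈ T, satisfy: for every internal node u and children u1, …, uk, the Gram identities ⟨ρ(ui) − ρ(u), ρ(uj) − ρ(u)⟩ = 0 for i ≠ j and ‖ρ(ui) − ρ(u)‖₂² = (q_{d+1} − q_d) N when |u| = d, where 0 ≤ q₀ ≤ q₁ ≤ ⋯ ≤ q_D ≤ 1. Then the root satisfies ‖ρ(∅) − (1/k^D) Σ_{u∈L} ρ(u)‖₂ ≤ √(D N / k). -/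

import Mathlib

open scoped BigOperators RealInnerProductSpace

lemma orth_sum_norm_sq {E : Type*} [NormedAddCommGroup E] [InnerProductSpace ℝ E]
    {n : ℕ} (x : Fin n → E) (h : ∀ i j, i ≠ j → ⟪x i, x j⟫ = 0) :
    ‖∑ i, x i‖ ^ 2 = ∑ i, ‖x i‖ ^ 2 := by
  have : ⟪∑ i, x i, ∑ j, x j⟫ = ∑ i, ⟪x i, x i⟫ := by
    rw [sum_inner]
    refine Finset.sum_congr rfl fun i _ => ?_
    rw [inner_sum]
    rw [Finset.sum_eq_single_of_mem i (Finset.mem_univ i)]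
    intro j _ hj
    exact h i j (Ne.symm hj)
  simpa [real_inner_self_eq_norm_sq] using this

theorem stmt_13 (N k D : ℕ) (hk : 0 < k)
    (q : ℕ → ℝ) (hq0 : 0 ≤ q 0) (hqD : q D ≤ 1)
    (hmono : ∀ d, d < D → q d ≤ q (d + 1))
    (ρ : (d : ℕ) → (Fin d → Fin k) → EuclideanSpace ℝ (Fin N))
    (horth : ∀ d, d < D → ∀ u : Fin d → Fin k, ∀ i j : Fin k, i ≠ j →
      ⟪ρ (d + 1) (Fin.snoc u i) - ρ d u, ρ (d + 1) (Fin.snoc u j) - ρ d u⟫ = 0)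
    (hnorm : ∀ d, d < D → ∀ u : Fin d → Fin k, ∀ i : Fin k,
      ‖ρ (d + 1) (Fin.snoc u i) - ρ d u‖ ^ 2 = (q (d + 1) - q d) * N) :
    ‖ρ 0 (fun i => i.elim0) - (1 / (k : ℝ) ^ D) • ∑ u : Fin D → Fin k, ρ D u‖
      ≤ Real.sqrt (D * N / k) := by
  have hk0 : (0:ℝ) < (k:ℝ) := by exact_mod_cast hk
  set b : (d : ℕ) → EuclideanSpace ℝ (Fin N) :=
    fun d => (1 / (k : ℝ) ^ d) • ∑ u : Fin d → Fin k, ρ d u with hb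
  -- step bound
  have step : ∀ d, d < D →
      ‖b (d+1) - b d‖ ≤ Real.sqrt ((q (d+1) - q d) * N / k) := by
    intro d hd
    have hqd : 0 ≤ q (d+1) - q d := sub_nonneg.2 (hmono d hd)
    have hsum : ∑ v : Fin (d+1) → Fin k, ρ (d+1) v
        = ∑ u : Fin d → Fin k, ∑ i : Fin k, ρ (d+1) (Fin.snoc u i) := by
      rw [← Fintype.sum_equiv (Fin.snocEquiv fun _ => Fin k)
        (fun p => ρ (d+1) (Fin.snoc p.2 p.1)) _ (fun p => rfl)]
      rw [Fintype.sum_prod_type]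
      exact Finset.sum_comm
    have hdiff : b (d+1) - b d
        = (1 / (k:ℝ) ^ (d+1)) • ∑ u : Fin d → Fin k,
            ∑ i : Fin k, (ρ (d+1) (Fin.snoc u i) - ρ d u) := by
      have hbd : b d = (1 / (k:ℝ) ^ (d+1)) •
          ∑ u : Fin d → Fin k, ∑ _i : Fin k, ρ d u := by
        simp only [Finset.sum_const, Finset.card_univ, Fintype.card_fin, hb]
        rw [Finset.smul_sum, Finset.smul_sum]
        refine Finset.sum_congr rfl fun u _ => ?_
        rw [smul_comm, ← Nat.cast_smul_eq_nsmul ℝ]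
        rw [smul_smul]
        congr 1
        field_simp
        ring
      simp only [hb]
      simp only [hsum]
      rw [show (1 / (k:ℝ) ^ d) • ∑ u : Fin d → Fin k, ρ d u
          = (1 / (k:ℝ) ^ (d+1)) • ∑ u : Fin d → Fin k, ∑ _i : Fin k, ρ d u from hbd,
        ← smul_sub, ← Finset.sum_sub_distrib]
      congr 1
      refine Finset.sum_congr rfl fun u _ => ?_
      rw [← Finset.sum_sub_distrib]
    rw [hdiff, norm_smul]
    have hnormsum : ∀ u : Fin d → Fin k,
        ‖∑ i : Fin k, (ρ (d+1) (Fin.snoc u i) - ρ d u)‖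
          = Real.sqrt ((k:ℝ) * ((q (d+1) - q d) * N)) := by
      intro u
      have h2 : ‖∑ i : Fin k, (ρ (d+1) (Fin.snoc u i) - ρ d u)‖ ^ 2
          = (k:ℝ) * ((q (d+1) - q d) * N) := by
        rw [orth_sum_norm_sq _ (fun i j hij => horth d hd u i j hij)]
        simp [hnorm d hd u]
      rw [← Real.sqrt_sq (norm_nonneg _), h2]
    calc ‖(1 / (k:ℝ) ^ (d+1))‖ * ‖∑ u : Fin d → Fin k,
            ∑ i : Fin k, (ρ (d+1) (Fin.snoc u i) - ρ d u)‖
        ≤ (1 / (k:ℝ) ^ (d+1)) * ∑ u : Fin d → Fin k,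
            ‖∑ i : Fin k, (ρ (d+1) (Fin.snoc u i) - ρ d u)‖ := by
          rw [Real.norm_eq_abs, abs_of_nonneg (by positivity)]
          exact mul_le_mul_of_nonneg_left (norm_sum_le _ _) (by positivity)
      _ = (1 / (k:ℝ) ^ (d+1)) * ((k:ℝ)^d * Real.sqrt ((k:ℝ) * ((q (d+1) - q d) * N))) := by
          simp only [hnormsum, Finset.sum_const, Finset.card_univ, Fintype.card_fun,
            Fintype.card_fin, nsmul_eq_mul]
          push_cast
          ring
      _ = Real.sqrt ((q (d+1) - q d) * N / k) := by
          have hsk : Real.sqrt k * Real.sqrt k = (k:ℝ) := Real.mul_self_sqrt hk0.le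
          have hsk0 : (0:ℝ) < Real.sqrt k := Real.sqrt_pos.2 hk0
          rw [Real.sqrt_mul (le_of_lt hk0), Real.sqrt_div (by positivity)]
          field_simp
          linear_combination ((k:ℝ)^d * Real.sqrt ((q (d+1) - q d) * N)) * hsk
  have h0 : b 0 = ρ 0 (fun i => i.elim0) := by
    simp only [hb, pow_zero]
    rw [Fintype.sum_unique]
    rw [show (1:ℝ)/1 = 1 by norm_num, one_smul]
    exact congrArg _ (funext fun i => i.elim0)
  have tel : b 0 - b D = -∑ d ∈ Finset.range D, (b (d+1) - b d) := by
    rw [Finset.sum_range_sub (fun d => b d)]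
    abel
  have goaleq : ρ 0 (fun i => i.elim0) - (1 / (k : ℝ) ^ D) • ∑ u : Fin D → Fin k, ρ D u
      = b 0 - b D := by rw [h0]
  rw [goaleq, tel, norm_neg]
  have hS : ∀ d ∈ Finset.range D, ‖b (d+1) - b d‖ ≤ Real.sqrt ((q (d+1) - q d) * N / k) :=
    fun d hd => step d (Finset.mem_range.1 hd)
  set S := ∑ d ∈ Finset.range D, Real.sqrt ((q (d+1) - q d) * N / k) with hSdef
  have hnn : 0 ≤ S := Finset.sum_nonneg fun d _ => Real.sqrt_nonneg _
  have h1 : S ^ 2 ≤ (D:ℝ) * ∑ d ∈ Finset.range D, ((q (d+1) - q d) * N / k) := by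
    have h := sq_sum_le_card_mul_sum_sq (s := Finset.range D)
      (f := fun d => Real.sqrt ((q (d+1) - q d) * N / k))
    rw [Finset.card_range] at h
    refine h.trans_eq ?_
    congr 1
    refine Finset.sum_congr rfl fun d hd => Real.sq_sqrt ?_
    have := hmono d (Finset.mem_range.1 hd)
    have : (0:ℝ) ≤ q (d+1) - q d := by linarith
    positivity
  have h2 : ∑ d ∈ Finset.range D, ((q (d+1) - q d) * N / k) = (q D - q 0) * N / k := by
    calc ∑ d ∈ Finset.range D, ((q (d+1) - q d) * N / k)
        = ∑ d ∈ Finset.range D, (q (d+1) * N / k - q d * N / k) :=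
          Finset.sum_congr rfl fun d _ => by ring
      _ = q D * N / k - q 0 * N / k := Finset.sum_range_sub (fun d => q d * N / k) D
      _ = (q D - q 0) * N / k := by ring
  have h3 : S ^ 2 ≤ (D:ℝ) * N / k := by
    rw [h2] at h1
    have : (D:ℝ) * ((q D - q 0) * N / k) ≤ (D:ℝ) * N / k := by
      rw [mul_div_assoc, mul_div_assoc]
      refine mul_le_mul_of_nonneg_left ?_ (Nat.cast_nonneg D)
      have hq : q D - q 0 ≤ 1 := by linarith
      have hNk : (0:ℝ) ≤ (N:ℝ) / k := by positivity
      calc (q D - q 0) * ((N:ℝ)/k)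
          ≤ 1 * ((N:ℝ)/k) := mul_le_mul_of_nonneg_right hq hNk
        _ = (N:ℝ)/k := one_mul _
    linarith
  calc ‖∑ d ∈ Finset.range D, (b (d+1) - b d)‖
      ≤ ∑ d ∈ Finset.range D, ‖b (d+1) - b d‖ := norm_sum_le _ _
    _ ≤ S := Finset.sum_le_sum hS
    _ = Real.sqrt (S ^ 2) := (Real.sqrt_sq hnn).symm
    _ ≤ Real.sqrt ((D:ℝ) * N / k) := Real.sqrt_le_sqrt h3
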